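/- Let m ≥ 1, a₀ ∈ ℝ, a ∈ ℝ^m, f(x) = a₀ + ⟨a,x⟩, and T(x) = x/f(x). Then for every x with f(x) ≠ 0, the determinant of the Fréchet derivative of T at x equals a₀/f(x)^{m+1}. -/

import Mathlib

open Matrix ContinuousLinearMap

/-- The Jacobian determinant of the f-twist map T(x) = x/f(x),
f(x) = a₀ + ⟨a,x⟩, at any point x with f(x) ≠ 0, equals a₀/f(x)^{m+1}. -/
theorem stmt4 (m : ℕ) (hm : 1 ≤ m) (a₀ : ℝ) (a : Fin m → ℝ)
    (f : (Fin m → ℝ) → ℝ) (hf : ∀ x, f x = a₀ + ∑ i, a i * x i)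
    (T : (Fin m → ℝ) → (Fin m → ℝ)) (hT : ∀ x, T x = (f x)⁻¹ • x) :
    ∀ x : Fin m → ℝ, f x ≠ 0 →
      LinearMap.det ((fderiv ℝ T x : (Fin m → ℝ) →L[ℝ] (Fin m → ℝ)) :
          (Fin m → ℝ) →ₗ[ℝ] (Fin m → ℝ)) = a₀ / (f x) ^ (m + 1) := by
  intro x hx
  have hTfun : T = fun y => (f y)⁻¹ • y := funext hT
  -- derivative of f
  set F : (Fin m → ℝ) →L[ℝ] ℝ := ∑ i, a i • (ContinuousLinearMap.proj i) with hF
  have hFapp : ∀ v, F v = ∑ i, a i * v i := by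
    intro v
    simp [hF, ContinuousLinearMap.sum_apply]
  have hf' : HasFDerivAt f F x := by
    have := (hasFDerivAt_const a₀ x).add F.hasFDerivAt
    rw [zero_add] at this
    have heq : f = (fun _ => a₀) + ⇑F := by
      funext y
      rw [Pi.add_apply, hf y, hFapp y]
    rw [heq]; exact this
  -- derivative of (f ·)⁻¹
  have hg : HasFDerivAt (fun y => (f y)⁻¹)
      ((smulRight (1 : ℝ →L[ℝ] ℝ) (-(f x ^ 2)⁻¹)).comp F) x :=
    (hasFDerivAt_inv hx).comp x hf'
  -- derivative of T
  have hD : HasFDerivAt T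
      ((f x)⁻¹ • (ContinuousLinearMap.id ℝ (Fin m → ℝ)) +
        ((smulRight (1 : ℝ →L[ℝ] ℝ) (-(f x ^ 2)⁻¹)).comp F).smulRight x) x := by
    rw [hTfun]
    exact hg.smul (hasFDerivAt_id x)
  set D := ((f x)⁻¹ • (ContinuousLinearMap.id ℝ (Fin m → ℝ)) +
        ((smulRight (1 : ℝ →L[ℝ] ℝ) (-(f x ^ 2)⁻¹)).comp F).smulRight x) with hDdef
  rw [hD.fderiv]
  -- express D as a matrix
  set c : ℝ := (f x)⁻¹ with hc
  have hc0 : c ≠ 0 := inv_ne_zero hx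
  set w : Fin m → ℝ := fun j => -(f x ^ 2)⁻¹ * a j with hw
  set M : Matrix (Fin m) (Fin m) ℝ := c • (1 : Matrix (Fin m) (Fin m) ℝ) +
      replicateCol Unit x * replicateRow Unit w with hM
  have hDM : (D : (Fin m → ℝ) →ₗ[ℝ] (Fin m → ℝ)) = Matrix.toLin' M := by
    apply LinearMap.ext
    intro v
    funext i
    simp only [hDdef, hM, ContinuousLinearMap.coe_coe, ContinuousLinearMap.add_apply,
      ContinuousLinearMap.smul_apply, ContinuousLinearMap.coe_id', id_eq,
      ContinuousLinearMap.smulRight_apply, ContinuousLinearMap.comp_apply,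
      ContinuousLinearMap.one_apply, Matrix.toLin'_apply, Matrix.mulVec, dotProduct,
      Matrix.add_apply, Matrix.smul_apply, Matrix.mul_apply, Pi.add_apply, Pi.smul_apply,
      smul_eq_mul, Matrix.one_apply, Matrix.replicateCol_apply, Matrix.replicateRow_apply, hFapp]
    have step : ∀ j, ((c * if i = j then 1 else 0) + ∑ _ : Unit, x i * w j) * v j
        = (c * if i = j then 1 else 0) * v j + (x i * w j) * v j := by
      intro j; simp [add_mul]
    rw [Finset.sum_congr rfl fun j _ => step j, Finset.sum_add_distrib]
    congr 1
    · rw [Finset.sum_eq_single i] <;> simp +contextual [eq_comm]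
    · rw [Finset.sum_mul, Finset.sum_mul]
      apply Finset.sum_congr rfl
      intro j _
      simp only [hw]
      ring
  rw [hDM, LinearMap.det_toLin']
  -- factor out c
  have hM2 : M = c • ((1 : Matrix (Fin m) (Fin m) ℝ) + replicateCol Unit x * replicateRow Unit (c⁻¹ • w)) := by
    rw [hM, smul_add]
    congr 1
    rw [Matrix.replicateRow_smul, Matrix.mul_smul, smul_smul, mul_inv_cancel₀ hc0, one_smul]
  rw [hM2, Matrix.det_smul, Matrix.det_one_add_replicateCol_mul_replicateRow]
  have hdot : (c⁻¹ • w) ⬝ᵥ x = c⁻¹ * (-(f x ^ 2)⁻¹) * ∑ j, a j * x j := by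
    simp only [dotProduct, Pi.smul_apply, smul_eq_mul, hw, Finset.mul_sum]
    apply Finset.sum_congr rfl
    intro j _
    ring
  rw [hdot]
  have hsum : ∑ j, a j * x j = f x - a₀ := by rw [hf x]; ring
  rw [hsum, hc]
  have h2 : (f x)⁻¹⁻¹ = f x := inv_inv _
  field_simp
  rw [Fintype.card_fin, one_div, inv_pow, pow_succ]
  rw [show (f x ^ m)⁻¹ * (f x + -(f x - a₀)) * (f x ^ m * f x)
      = ((f x ^ m)⁻¹ * f x ^ m) * (f x + -(f x - a₀)) * f x by ring,
    inv_mul_cancel₀ (pow_ne_zero m hx)]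
  ring
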